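/- Let T be a bounded operator admitting an A-adjoint (there exists a bounded W with AW = T*A), with AT² = 0 and AT ≠ 0, and suppose the range of A is closed and has dimension at least 2. Then w_A(T) = ‖T‖_A / 2, where w_A(T) = sup{|⟨Tx,x⟩_A| : x ∈ H, ‖x‖_A = 1} and ‖T‖_A = sup{‖Tx‖_A : x ∈ H, ‖x‖_A ≤ 1}. -/

import Mathlib

noncomputable section

open Filter

variable {H : Type*} [NormedAddCommGroup H] [InnerProductSpace ℂ H] [CompleteSpace H]

/-- The paper's semi-inner product `⟨x, y⟩_A = ⟨A x, y⟩`, where the inner product of the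
paper is linear in the *first* argument; in Mathlib's convention this is `⟪y, A x⟫_ℂ`. -/
def sipA (A : H →L[ℂ] H) (x y : H) : ℂ := inner ℂ y (A x)

/-- The `A`-seminorm `‖x‖_A = ⟨A x, x⟩ ^ (1/2)`. -/
def semiNormA (A : H →L[ℂ] H) (x : H) : ℝ := Real.sqrt (sipA A x x).re

/-- The `A`-`q`-numerical range `W_{q,A}(T)`. -/
def WqA (A : H →L[ℂ] H) (q : ℂ) (T : H →L[ℂ] H) : Set ℂ :=
  {z | ∃ x y : H, semiNormA A x = 1 ∧ semiNormA A y = 1 ∧ sipA A x y = q ∧ z = sipA A (T x) y}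

/-- The `A`-`q`-numerical radius `w_{q,A}(T)`. -/
def wqA (A : H →L[ℂ] H) (q : ℂ) (T : H →L[ℂ] H) : ℝ := sSup ((fun z : ℂ => ‖z‖) '' WqA A q T)

/-- The `A`-operator seminorm `‖T‖_A = sup {‖T x‖_A : ‖x‖_A ≤ 1}`. -/
def opNormA (A T : H →L[ℂ] H) : ℝ :=
  sSup ((fun x => semiNormA A (T x)) '' {x : H | semiNormA A x ≤ 1})

/-- `T` is `A`-bounded: `‖T x‖_A ≤ c ‖x‖_A` for some `c > 0`. -/
def ABounded (A T : H →L[ℂ] H) : Prop := ∃ c > 0, ∀ x : H, semiNormA A (T x) ≤ c * semiNormA A x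

section Aux

open scoped InnerProductSpace
open ContinuousLinearMap

set_option synthInstance.maxHeartbeats 1000000
set_option maxHeartbeats 1000000

variable {A S : H →L[ℂ] H}

lemma aux_sip_eq (hSS : S * S = A) (hsym : ∀ x y : H, ⟪S x, y⟫_ℂ = ⟪x, S y⟫_ℂ) (x y : H) :
    sipA A x y = ⟪S y, S x⟫_ℂ := by
  have h : A x = S (S x) := by rw [← hSS]; rfl
  rw [sipA, h, ← hsym]

lemma aux_semiNorm_eq (hS : ∀ x y : H, sipA A x y = ⟪S y, S x⟫_ℂ) (x : H) :
    semiNormA A x = ‖S x‖ := by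
  rw [semiNormA, hS]
  have h : RCLike.re ⟪S x, S x⟫_ℂ = ‖S x‖ ^ 2 := inner_self_eq_norm_sq (S x)
  rw [show (⟪S x, S x⟫_ℂ).re = RCLike.re ⟪S x, S x⟫_ℂ from rfl, h,
    Real.sqrt_sq (norm_nonneg _)]

lemma aux_norm_coe_inv_smul {r : ℝ} (hr : 0 < r) (v : H) :
    ‖((r : ℂ))⁻¹ • v‖ = r⁻¹ * ‖v‖ := by
  rw [norm_smul, norm_inv, Complex.norm_real, Real.norm_of_nonneg hr.le]

end Aux

open scoped InnerProductSpace in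
set_option synthInstance.maxHeartbeats 1000000 in
set_option maxHeartbeats 2000000 in
theorem stmt_17 (A : H →L[ℂ] H) (hA : A.IsPositive)
    (hrank : 2 ≤ Module.rank ℂ (LinearMap.range A.toLinearMap))
    (hclosed : IsClosed ((LinearMap.range A.toLinearMap : Submodule ℂ H) : Set H))
    (T : H →L[ℂ] H)
    (hadj : ∃ W : H →L[ℂ] H, A.comp W = (ContinuousLinearMap.adjoint T).comp A)
    (hnil2 : A.comp (T ^ 2) = 0) (hnil1 : A.comp T ≠ 0) :
    sSup {r : ℝ | ∃ x : H, semiNormA A x = 1 ∧ r = ‖sipA A (T x) x‖}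
      = opNormA A T / 2 := by
  classical
  obtain ⟨W, hW⟩ := hadj
  have hA0 : (0 : H →L[ℂ] H) ≤ A := (ContinuousLinearMap.nonneg_iff_isPositive A).2 hA
  set S : H →L[ℂ] H := CFC.sqrt A with hSdef
  have hS0 : (0 : H →L[ℂ] H) ≤ S := CFC.sqrt_nonneg (a := A)
  have hSS : S * S = A := CFC.sqrt_mul_sqrt_self A hA0
  have hSsa : IsSelfAdjoint S :=
    ((ContinuousLinearMap.nonneg_iff_isPositive S).1 hS0).isSelfAdjoint
  have hsym : ∀ x y : H, ⟪S x, y⟫_ℂ = ⟪x, S y⟫_ℂ :=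
    fun x y => (ContinuousLinearMap.isSelfAdjoint_iff_isSymmetric.1 hSsa) x y
  have hsip : ∀ x y : H, sipA A x y = ⟪S y, S x⟫_ℂ := aux_sip_eq hSS hsym
  have hnorm : ∀ x : H, semiNormA A x = ‖S x‖ := aux_semiNorm_eq hsip
  have hApp : ∀ x : H, A x = S (S x) := fun x => by rw [← hSS]; rfl
  have hSzero : ∀ v : H, A v = 0 → S v = 0 := by
    intro v hv
    have h : ⟪S v, S v⟫_ℂ = 0 := by rw [hsym, ← hApp, hv, inner_zero_right]
    exact inner_self_eq_zero.1 h
  -- `A ∘ T = W† ∘ A`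
  have hATW : A.comp T = (ContinuousLinearMap.adjoint W).comp A := by
    have h := congrArg ContinuousLinearMap.adjoint hW
    rw [ContinuousLinearMap.adjoint_comp, ContinuousLinearMap.adjoint_comp,
      ContinuousLinearMap.adjoint_adjoint, hA.isSelfAdjoint.adjoint_eq] at h
    exact h.symm
  have hTzero : ∀ v : H, S v = 0 → S (T v) = 0 := by
    intro v hv
    have hAv : A v = 0 := by rw [hApp, hv, map_zero]
    have hATv : A (T v) = 0 := by
      have h : (A.comp T) v = ((ContinuousLinearMap.adjoint W).comp A) v := by rw [hATW]
      simpa [ContinuousLinearMap.comp_apply, hAv] using h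
    exact hSzero _ hATv
  have hT2 : ∀ v : H, S (T (T v)) = 0 := by
    intro v
    apply hSzero
    have h : (A.comp (T ^ 2)) v = (0 : H →L[ℂ] H) v := by rw [hnil2]
    simpa [ContinuousLinearMap.comp_apply, pow_two, ContinuousLinearMap.mul_apply] using h
  -- bounded below on the range of A
  set R : Submodule ℂ H := LinearMap.range A.toLinearMap with hRdef
  haveI : CompleteSpace R := hclosed.completeSpace_coe
  have hmemR : ∀ x : H, A x ∈ R := fun x => LinearMap.mem_range_self _ x
  have hsymA : ∀ x y : H, ⟪A x, y⟫_ℂ = ⟪x, A y⟫_ℂ :=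
    fun x y => (ContinuousLinearMap.isSelfAdjoint_iff_isSymmetric.1 hA.isSelfAdjoint) x y
  set Arr : R →L[ℂ] R := (A.comp R.subtypeL).codRestrict R (fun x => hmemR x) with hArrdef
  have hArr_apply : ∀ v : R, (Arr v : H) = A (v : H) := fun v => rfl
  have horth : ∀ v ∈ Rᗮ, A v = 0 := by
    intro v hv
    have h1 : ⟪A (A v), v⟫_ℂ = 0 := hv _ (hmemR (A v))
    have h2 : ⟪A v, A v⟫_ℂ = 0 := by
      rw [hsymA, ← inner_conj_symm, h1, map_zero]
    exact inner_self_eq_zero.1 h2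
  have hker : LinearMap.ker (Arr : R →ₗ[ℂ] R) = ⊥ := by
    rw [LinearMap.ker_eq_bot']
    intro v hv
    obtain ⟨w, hw⟩ := v.2
    have hAv : A (v : H) = 0 := by
      have := congrArg (Subtype.val) hv
      exact this
    have hw' : A w = (v : H) := hw
    have h : ⟪(v : H), (v : H)⟫_ℂ = 0 := by
      rw [← hw', hsymA, hw', hAv, inner_zero_right]
    exact Subtype.ext (inner_self_eq_zero.1 h)
  have hrange : LinearMap.range (Arr : R →ₗ[ℂ] R) = ⊤ := by
    rw [LinearMap.range_eq_top]
    rintro ⟨yv, hy⟩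
    obtain ⟨x, hx⟩ := hy
    obtain ⟨r, hr, z, hz, hxz⟩ := R.exists_add_mem_mem_orthogonal x
    refine ⟨⟨r, hr⟩, ?_⟩
    apply Subtype.ext
    show A r = yv
    have h : A x = A r + A z := by rw [hxz, map_add]
    rw [horth z hz, add_zero] at h
    rw [← h]
    exact hx
  set e := ContinuousLinearEquiv.ofBijective Arr hker hrange with hedef
  set c₁ : ℝ := ‖(e.symm : R →L[ℂ] R)‖ with hc₁def
  have hc₁0 : 0 ≤ c₁ := norm_nonneg _
  have hbb : ∀ v : R, ‖(v : H)‖ ≤ c₁ * ‖A (v : H)‖ := by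
    intro v
    have h1 : v = e.symm (e v) := (e.symm_apply_apply v).symm
    calc ‖(v : H)‖ = ‖v‖ := rfl
      _ = ‖e.symm (e v)‖ := by rw [e.symm_apply_apply]
      _ ≤ c₁ * ‖e v‖ := (e.symm : R →L[ℂ] R).le_opNorm (e v)
      _ = c₁ * ‖A (v : H)‖ := by
          have h2 : (e v : H) = A (v : H) := hArr_apply v
          rw [show ‖e v‖ = ‖(e v : H)‖ from rfl, h2]
  -- the A-boundedness constant
  set c : ℝ := c₁ * ‖S‖ * (‖S‖ * ‖T‖) with hcdef
  have hc0 : 0 ≤ c := by positivity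
  have hcbound : ∀ x : H, ‖S (T x)‖ ≤ c * ‖S x‖ := by
    intro x
    obtain ⟨r, hr, z, hz, hxz⟩ := R.exists_add_mem_mem_orthogonal x
    have hSz : S z = 0 := hSzero z (horth z hz)
    have hSTz : S (T z) = 0 := hTzero z hSz
    have h1 : S (T x) = S (T r) := by rw [hxz, map_add, map_add, hSTz, add_zero]
    have h2 : S x = S r := by rw [hxz, map_add, hSz, add_zero]
    have h3 : ‖A r‖ ≤ ‖S‖ * ‖S r‖ := by
      rw [hApp]; exact S.le_opNorm (S r)
    have h4 : ‖r‖ ≤ c₁ * (‖S‖ * ‖S r‖) := by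
      calc ‖r‖ = ‖((⟨r, hr⟩ : R) : H)‖ := rfl
        _ ≤ c₁ * ‖A r‖ := hbb ⟨r, hr⟩
        _ ≤ c₁ * (‖S‖ * ‖S r‖) := by
            exact mul_le_mul_of_nonneg_left h3 hc₁0
    have h5 : ‖S (T r)‖ ≤ ‖S‖ * (‖T‖ * ‖r‖) := by
      calc ‖S (T r)‖ ≤ ‖S‖ * ‖T r‖ := S.le_opNorm _
        _ ≤ ‖S‖ * (‖T‖ * ‖r‖) := by
            exact mul_le_mul_of_nonneg_left (T.le_opNorm r) (norm_nonneg S)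
    rw [h1, h2]
    calc ‖S (T r)‖ ≤ ‖S‖ * (‖T‖ * ‖r‖) := h5
      _ ≤ ‖S‖ * (‖T‖ * (c₁ * (‖S‖ * ‖S r‖))) := by
          apply mul_le_mul_of_nonneg_left _ (norm_nonneg S)
          exact mul_le_mul_of_nonneg_left h4 (norm_nonneg T)
      _ = c * ‖S r‖ := by rw [hcdef]; ring
  -- basic facts about `opNormA`
  have hSnbdd : BddAbove ((fun x => semiNormA A (T x)) '' {x : H | semiNormA A x ≤ 1}) := by
    refine ⟨c, ?_⟩
    rintro y ⟨x, hx, rfl⟩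
    simp only [Set.mem_setOf_eq] at hx
    rw [hnorm] at hx
    show semiNormA A (T x) ≤ c
    rw [hnorm]
    calc ‖S (T x)‖ ≤ c * ‖S x‖ := hcbound x
      _ ≤ c * 1 := mul_le_mul_of_nonneg_left hx hc0
      _ = c := mul_one c
  have hmem0 : (0 : ℝ) ∈ ((fun x => semiNormA A (T x)) '' {x : H | semiNormA A x ≤ 1}) := by
    refine ⟨0, ?_, ?_⟩
    · simp only [Set.mem_setOf_eq]
      rw [hnorm, map_zero, norm_zero]
      norm_num
    · show semiNormA A (T 0) = 0
      rw [map_zero, hnorm, map_zero, norm_zero]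
  have hN0 : 0 ≤ opNormA A T := le_csSup hSnbdd hmem0
  have hNle : ∀ x : H, ‖S x‖ ≤ 1 → ‖S (T x)‖ ≤ opNormA A T := by
    intro x hx
    apply le_csSup hSnbdd
    exact ⟨x, by simp only [Set.mem_setOf_eq]; rw [hnorm]; exact hx,
      by show semiNormA A (T x) = ‖S (T x)‖; exact hnorm (T x)⟩
  have hsmul : ∀ (a : ℂ) (v : H), S (T (a • v)) = a • S (T v) := by
    intro a v; rw [map_smul, map_smul]
  have hNmul : ∀ x : H, ‖S (T x)‖ ≤ opNormA A T * ‖S x‖ := by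
    intro x
    rcases eq_or_ne (S x) 0 with h0 | h0
    · rw [hTzero x h0, norm_zero]; positivity
    · have hpos : 0 < ‖S x‖ := norm_pos_iff.2 h0
      have h1 : ‖S (((‖S x‖ : ℝ) : ℂ)⁻¹ • x)‖ = 1 := by
        rw [map_smul, aux_norm_coe_inv_smul hpos, inv_mul_cancel₀ hpos.ne']
      have h2 := hNle _ h1.le
      rw [hsmul, aux_norm_coe_inv_smul hpos] at h2
      calc ‖S (T x)‖ = ‖S x‖ * (‖S x‖⁻¹ * ‖S (T x)‖) := by field_simp
        _ ≤ ‖S x‖ * opNormA A T := mul_le_mul_of_nonneg_left h2 hpos.le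
        _ = opNormA A T * ‖S x‖ := mul_comm _ _
  -- facts about the numerical radius set
  set Sw : Set ℝ :=
    {r : ℝ | ∃ x : H, semiNormA A x = 1 ∧ r = ‖sipA A (T x) x‖} with hSwdef
  have habs : ∀ v : H, ‖sipA A (T v) v‖ = ‖⟪S v, S (T v)⟫_ℂ‖ := by
    intro v; rw [hsip]
  have hSwbdd : BddAbove Sw := by
    refine ⟨c, ?_⟩
    rintro b ⟨x, hx1, rfl⟩
    rw [hnorm] at hx1
    rw [habs]
    calc ‖⟪S x, S (T x)⟫_ℂ‖ ≤ ‖S x‖ * ‖S (T x)‖ := norm_inner_le_norm _ _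
      _ = ‖S (T x)‖ := by rw [hx1, one_mul]
      _ ≤ c * ‖S x‖ := hcbound x
      _ = c := by rw [hx1, mul_one]
  have hx0 : ∃ x0 : H, ‖S x0‖ = 1 ∧ 0 < ‖S (T x0)‖ := by
    have hy : ∃ y : H, A (T y) ≠ 0 := by
      by_contra hcon
      push_neg at hcon
      exact hnil1 (ContinuousLinearMap.ext fun v => by simpa using hcon v)
    obtain ⟨y, hy⟩ := hy
    have hSTy : S (T y) ≠ 0 := fun h => hy (by rw [hApp, h, map_zero])
    have hSy : S y ≠ 0 := fun h => hSTy (hTzero y h)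
    have hpos : 0 < ‖S y‖ := norm_pos_iff.2 hSy
    refine ⟨((‖S y‖ : ℝ) : ℂ)⁻¹ • y, ?_, ?_⟩
    · rw [map_smul, aux_norm_coe_inv_smul hpos, inv_mul_cancel₀ hpos.ne']
    · rw [hsmul, aux_norm_coe_inv_smul hpos]
      exact mul_pos (inv_pos.2 hpos) (norm_pos_iff.2 hSTy)
  obtain ⟨x0, hx01, hx02⟩ := hx0
  have hNpos : 0 < opNormA A T := lt_of_lt_of_le hx02 (hNle x0 hx01.le)
  have hSwmem : ∀ x : H, ‖S x‖ = 1 → ‖sipA A (T x) x‖ ∈ Sw :=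
    fun x hx => ⟨x, by rw [hnorm]; exact hx, rfl⟩
  have hL0 : 0 ≤ sSup Sw :=
    le_trans (norm_nonneg _) (le_csSup hSwbdd (hSwmem x0 hx01))
  have hLmul : ∀ v : H, ‖⟪S v, S (T v)⟫_ℂ‖ ≤ sSup Sw * ‖S v‖ ^ 2 := by
    intro v
    rcases eq_or_ne (S v) 0 with h0 | h0
    · rw [h0, inner_zero_left, norm_zero]
      positivity
    · have hpos : 0 < ‖S v‖ := norm_pos_iff.2 h0
      have h2 := le_csSup hSwbdd (hSwmem (((‖S v‖ : ℝ) : ℂ)⁻¹ • v)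
        (by rw [map_smul, aux_norm_coe_inv_smul hpos, inv_mul_cancel₀ hpos.ne']))
      rw [habs] at h2
      have h3 : ‖⟪S (((‖S v‖ : ℝ) : ℂ)⁻¹ • v), S (T (((‖S v‖ : ℝ) : ℂ)⁻¹ • v))⟫_ℂ‖
          = (‖S v‖⁻¹) ^ 2 * ‖⟪S v, S (T v)⟫_ℂ‖ := by
        rw [map_smul, hsmul, inner_smul_left, inner_smul_right, norm_mul, norm_mul,
          RCLike.norm_conj, norm_inv, Complex.norm_real, Real.norm_of_nonneg hpos.le]
        ring
      rw [h3] at h2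
      calc ‖⟪S v, S (T v)⟫_ℂ‖
          = ‖S v‖ ^ 2 * ((‖S v‖⁻¹) ^ 2 * ‖⟪S v, S (T v)⟫_ℂ‖) := by
            field_simp
        _ ≤ ‖S v‖ ^ 2 * sSup Sw := mul_le_mul_of_nonneg_left h2 (by positivity)
        _ = sSup Sw * ‖S v‖ ^ 2 := mul_comm _ _
  -- upper bound
  have hup : sSup Sw ≤ opNormA A T / 2 := by
    apply Real.sSup_le _ (by positivity)
    rintro b ⟨x, hx1, rfl⟩
    rw [hnorm] at hx1
    rw [habs]
    rcases eq_or_ne (S (T x)) 0 with h0 | h0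
    · rw [h0, inner_zero_right, norm_zero]
      positivity
    · set N := opNormA A T with hNdef
      set s : ℝ := ‖S (T x)‖ with hsdef
      have hspos : 0 < s := norm_pos_iff.2 h0
      set g : ℂ := ⟪S x, S (T x)⟫_ℂ with hgdef
      set v' : H := ((s : ℝ) : ℂ) ^ 2 • x + (-(starRingEnd ℂ) g) • T x with hv'def
      have hgg : g * (starRingEnd ℂ) g = ((‖g‖ : ℝ) : ℂ) ^ 2 := by
        rw [Complex.mul_conj, Complex.normSq_eq_norm_sq]
        push_cast
        ring
      have hxx : ⟪S x, S x⟫_ℂ = 1 := by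
        rw [inner_self_eq_norm_sq_to_K, hx1]
        norm_num
      have huu : ⟪S (T x), S (T x)⟫_ℂ = ((s : ℝ) : ℂ) ^ 2 := by
        rw [inner_self_eq_norm_sq_to_K, hsdef]
        norm_cast
      have hux : ⟪S (T x), S x⟫_ℂ = (starRingEnd ℂ) g := by
        rw [hgdef, inner_conj_symm]
      have hip : ⟪S v', S v'⟫_ℂ = ((s ^ 2 * (s ^ 2 - ‖g‖ ^ 2) : ℝ) : ℂ) := by
        rw [hv'def]
        simp only [map_add, map_smul, inner_add_left, inner_add_right,
          inner_smul_left, inner_smul_right, map_neg, RingHomCompTriple.comp_apply,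
          RingHom.id_apply, starRingEnd_self_apply, map_pow, Complex.conj_ofReal]
        rw [hxx, huu, hux]
        push_cast
        linear_combination (-(((s : ℝ) : ℂ)) ^ 2) * hgg
      have hnv : ‖S v'‖ ^ 2 = s ^ 2 * (s ^ 2 - ‖g‖ ^ 2) := by
        have h := inner_self_eq_norm_sq (𝕜 := ℂ) (S v')
        rw [hip] at h
        rw [← h]
        simp only [RCLike.re_to_complex, Complex.ofReal_re]
      have hSTv' : S (T v') = (((s : ℝ) : ℂ) ^ 2) • S (T x) := by
        rw [hv'def, map_add, map_smul, map_smul, map_add, map_smul, map_smul, hT2,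
          smul_zero, add_zero]
      have h5 : s ^ 2 * s ≤ N * ‖S v'‖ := by
        have h := hNmul v'
        rw [hSTv', norm_smul] at h
        have hns : ‖(((s : ℝ) : ℂ) ^ 2)‖ = s ^ 2 := by
          rw [norm_pow, Complex.norm_real, Real.norm_of_nonneg hspos.le]
        rw [hns] at h
        exact h
      have hnv0 : 0 ≤ ‖S v'‖ := norm_nonneg _
      have e1 : (s ^ 2 * s) ^ 2 ≤ N ^ 2 * ‖S v'‖ ^ 2 := by
        nlinarith [mul_self_le_mul_self (by positivity : (0:ℝ) ≤ s ^ 2 * s) h5, hnv0, hN0]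
      have e2 : s ^ 4 ≤ N ^ 2 * (s ^ 2 - ‖g‖ ^ 2) := by
        rw [hnv] at e1
        have hs2 : (0:ℝ) < s ^ 2 := by positivity
        have e1' : s ^ 2 * s ^ 4 ≤ s ^ 2 * (N ^ 2 * (s ^ 2 - ‖g‖ ^ 2)) := by nlinarith [e1]
        exact le_of_mul_le_mul_left e1' hs2
      have e3 : ‖g‖ ^ 2 ≤ N ^ 2 / 4 := by
        have hN2 : (0:ℝ) < N ^ 2 := by positivity
        have h' : N ^ 2 * ‖g‖ ^ 2 ≤ N ^ 2 * (N ^ 2 / 4) := by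
          nlinarith [sq_nonneg (s ^ 2 - N ^ 2 / 2), e2]
        exact le_of_mul_le_mul_left h' hN2
      nlinarith [norm_nonneg g, hNpos, e3]
  -- lower bound
  have hlow : opNormA A T ≤ 2 * sSup Sw := by
    rw [opNormA]
    apply Real.sSup_le _ (by linarith)
    rintro b ⟨z, hz1, rfl⟩
    simp only [Set.mem_setOf_eq] at hz1
    rw [hnorm] at hz1
    show semiNormA A (T z) ≤ 2 * sSup Sw
    rw [hnorm]
    rcases eq_or_ne (S (T z)) 0 with h0 | h0
    · rw [h0, norm_zero]; linarith
    · set r : ℝ := ‖S (T z)‖ with hrdef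
      have hrpos : 0 < r := norm_pos_iff.2 h0
      set y : H := ((r : ℝ) : ℂ)⁻¹ • T z with hydef
      have hy1 : ‖S y‖ = 1 := by
        rw [hydef, map_smul, aux_norm_coe_inv_smul hrpos, inv_mul_cancel₀ hrpos.ne']
      have hr0 : ((r : ℝ) : ℂ) ≠ 0 := by
        exact_mod_cast hrpos.ne'
      have hyTz : ⟪S y, S (T z)⟫_ℂ = (r : ℂ) := by
        rw [hydef, map_smul, inner_smul_left, inner_self_eq_norm_sq_to_K, map_inv₀,
          Complex.conj_ofReal, ← hrdef]
        push_cast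
        field_simp
        rfl
      have polar : ⟪S (z + y), S (T (z + y))⟫_ℂ
            + Complex.I * ⟪S (z + Complex.I • y), S (T (z + Complex.I • y))⟫_ℂ
            - ⟪S (z - y), S (T (z - y))⟫_ℂ
            - Complex.I * ⟪S (z - Complex.I • y), S (T (z - Complex.I • y))⟫_ℂ
          = 4 * (r : ℂ) := by
        rw [← hyTz]
        simp only [map_add, map_sub, map_smul, inner_add_left, inner_add_right,
          inner_sub_left, inner_sub_right, inner_smul_left, inner_smul_right, Complex.conj_I]
        linear_combination (2 * ⟪S z, S (T y)⟫_ℂ - 2 * ⟪S y, S (T z)⟫_ℂ) * Complex.I_sq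
      have hQ1 := hLmul (z + y)
      have hQ2 := hLmul (z + Complex.I • y)
      have hQ3 := hLmul (z - y)
      have hQ4 := hLmul (z - Complex.I • y)
      have hIy : ‖Complex.I • S y‖ = ‖S y‖ := by
        rw [norm_smul, Complex.norm_I, one_mul]
      have hpar1 : ‖S z + S y‖ ^ 2 + ‖S z - S y‖ ^ 2 = 2 * (‖S z‖ ^ 2 + ‖S y‖ ^ 2) := by
        have h := parallelogram_law_with_norm ℂ (S z) (S y)
        nlinarith [h]
      have hpar2 : ‖S z + Complex.I • S y‖ ^ 2 + ‖S z - Complex.I • S y‖ ^ 2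
          = 2 * (‖S z‖ ^ 2 + ‖S y‖ ^ 2) := by
        have h := parallelogram_law_with_norm ℂ (S z) (Complex.I • S y)
        rw [hIy] at h
        nlinarith [h]
      have htri : (4 : ℝ) * r
          ≤ ‖⟪S (z + y), S (T (z + y))⟫_ℂ‖
            + ‖⟪S (z + Complex.I • y), S (T (z + Complex.I • y))⟫_ℂ‖
            + ‖⟪S (z - y), S (T (z - y))⟫_ℂ‖
            + ‖⟪S (z - Complex.I • y), S (T (z - Complex.I • y))⟫_ℂ‖ := by
        have h4r : (4 : ℝ) * r = ‖(4 : ℂ) * (r : ℂ)‖ := by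
          rw [norm_mul]
          simp [Complex.norm_real, Real.norm_of_nonneg hrpos.le, abs_of_nonneg hrpos.le]
        rw [h4r, ← polar]
        set q1 := ⟪S (z + y), S (T (z + y))⟫_ℂ
        set q2 := ⟪S (z + Complex.I • y), S (T (z + Complex.I • y))⟫_ℂ
        set q3 := ⟪S (z - y), S (T (z - y))⟫_ℂ
        set q4 := ⟪S (z - Complex.I • y), S (T (z - Complex.I • y))⟫_ℂ
        calc ‖q1 + Complex.I * q2 - q3 - Complex.I * q4‖
            ≤ ‖q1 + Complex.I * q2 - q3‖ + ‖Complex.I * q4‖ := norm_sub_le _ _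
          _ ≤ ‖q1 + Complex.I * q2‖ + ‖q3‖ + ‖Complex.I * q4‖ := by
              have := norm_sub_le (q1 + Complex.I * q2) q3
              linarith
          _ ≤ ‖q1‖ + ‖Complex.I * q2‖ + ‖q3‖ + ‖Complex.I * q4‖ := by
              have := norm_add_le q1 (Complex.I * q2)
              linarith
          _ = ‖q1‖ + ‖q2‖ + ‖q3‖ + ‖q4‖ := by
              rw [norm_mul, norm_mul, Complex.norm_I, one_mul, one_mul]
      have hz2 : ‖S z‖ ^ 2 ≤ 1 := by nlinarith [norm_nonneg (S z), hz1]
      have hE1 : S (z + y) = S z + S y := map_add S z y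
      have hE2 : S (z + Complex.I • y) = S z + Complex.I • S y := by rw [map_add, map_smul]
      have hE3 : S (z - y) = S z - S y := map_sub S z y
      have hE4 : S (z - Complex.I • y) = S z - Complex.I • S y := by rw [map_sub, map_smul]
      have hsum : ‖S (z + y)‖ ^ 2 + ‖S (z + Complex.I • y)‖ ^ 2 + ‖S (z - y)‖ ^ 2
          + ‖S (z - Complex.I • y)‖ ^ 2 ≤ 8 := by
        rw [hE1, hE2, hE3, hE4]
        rw [hy1] at hpar1 hpar2
        nlinarith [hpar1, hpar2, hz2]
      -- combine
      have h1 : (4 : ℝ) * r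
          ≤ sSup Sw * ‖S (z + y)‖ ^ 2 + sSup Sw * ‖S (z + Complex.I • y)‖ ^ 2
            + sSup Sw * ‖S (z - y)‖ ^ 2 + sSup Sw * ‖S (z - Complex.I • y)‖ ^ 2 := by
        linarith [htri, hQ1, hQ2, hQ3, hQ4]
      have h2 : sSup Sw * ‖S (z + y)‖ ^ 2 + sSup Sw * ‖S (z + Complex.I • y)‖ ^ 2
            + sSup Sw * ‖S (z - y)‖ ^ 2 + sSup Sw * ‖S (z - Complex.I • y)‖ ^ 2
          = sSup Sw * (‖S (z + y)‖ ^ 2 + ‖S (z + Complex.I • y)‖ ^ 2 + ‖S (z - y)‖ ^ 2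
            + ‖S (z - Complex.I • y)‖ ^ 2) := by ring
      have h3 := mul_le_mul_of_nonneg_left hsum hL0
      linarith
  linarith [hup, hlow]
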